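/- Corollary 4 (substructural generation of vorticity in complex fluids): For a steady flow of a complex fluid with order-parameter values in ℝᵏ satisfying both the steady momentum balance ρ (Dv)v = div T with T = −p̃ I − T̄^E and the steady substructural balance div S − z = v·grad(∂_ν̇χ) − ∂_νχ, if the entropy η and the total enthalpy h_c are constant throughout B, then at every point of B and for every index i: (ω × v)_i = −Σ_α ∂_i( ι ( Σ_j ∂_j S_α^j − v·grad((∂_ν̇χ)_α) + (∂_νχ)_α ) ) ν^α − Σ_{α,j} ∂_i((∂_Nφ)_α^j) ∂_jν^α − ι Σ_α ∂_iν^α ( Σ_j ∂_j((∂_Nφ)_α^j) ) − ι Σ_{α,j} (∂_Nφ)_α^j ∂_j∂_iν^α. -/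

import Mathlib

noncomputable section

/-- Points of ℝ³. -/
abbrev V3 : Type := Fin 3 → ℝ

/-- Partial derivative ∂ᵢ of a scalar field on ℝ³. -/
def pd (i : Fin 3) (f : V3 → ℝ) (x : V3) : ℝ :=
  fderiv ℝ f x (Pi.single i 1)

/-- Cross product on ℝ³. -/
def cross (a b : V3) : V3 :=
  ![a 1 * b 2 - a 2 * b 1,
    a 2 * b 0 - a 0 * b 2,
    a 0 * b 1 - a 1 * b 0]

/-- Curl of a vector field on ℝ³. -/
def curl (u : V3 → V3) (x : V3) : V3 :=
  ![pd 1 (fun y => u y 2) x - pd 2 (fun y => u y 1) x,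
    pd 2 (fun y => u y 0) x - pd 0 (fun y => u y 2) x,
    pd 0 (fun y => u y 1) x - pd 1 (fun y => u y 0) x]

/-- A steady complex fluid on an open set `B ⊆ ℝ³` with order-parameter values
in `ℝᵏ`: smooth fields `ρ > 0` (mass density), `η` (entropy), `v` (velocity),
`ν` (order parameter), a smooth potential `φ = φ(ι, n, N, η)` and a smooth
kinetic co-energy `χ = χ(n, ṅ)`. -/
structure ComplexFluid (k : ℕ) where
  B : Set V3
  hB : IsOpen B
  ρ : V3 → ℝ
  η : V3 → ℝ
  v : V3 → V3
  ν : V3 → Fin k → ℝ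
  φ : ℝ × (Fin k → ℝ) × (Fin k → Fin 3 → ℝ) × ℝ → ℝ
  χ : (Fin k → ℝ) × (Fin k → ℝ) → ℝ
  hρ : ContDiffOn ℝ (⊤ : ℕ∞) ρ B
  hη : ContDiffOn ℝ (⊤ : ℕ∞) η B
  hv : ContDiffOn ℝ (⊤ : ℕ∞) v B
  hν : ContDiffOn ℝ (⊤ : ℕ∞) ν B
  hφ : ContDiff ℝ (⊤ : ℕ∞) φ
  hχ : ContDiff ℝ (⊤ : ℕ∞) χ
  hρpos : ∀ x ∈ B, 0 < ρ x

namespace ComplexFluid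

variable {k : ℕ} (K : ComplexFluid k)

/-- Specific volume `ι = 1/ρ`. -/
def ι (x : V3) : ℝ := (K.ρ x)⁻¹

/-- Gradient of the order parameter, components `(Dν)_α^j = ∂_jν^α`. -/
def Dν (x : V3) (α : Fin k) (j : Fin 3) : ℝ := pd j (fun y => K.ν y α) x

/-- The point `(ι(x), ν(x), Dν(x), η(x))` at which `φ` and its partial
derivatives are evaluated. -/
def pt (x : V3) : ℝ × (Fin k → ℝ) × (Fin k → Fin 3 → ℝ) × ℝ :=
  (K.ι x, K.ν x, K.Dν x, K.η x)

/-- `∂_ιφ` evaluated along the fields. -/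
def dφι (x : V3) : ℝ := fderiv ℝ K.φ (K.pt x) (1, 0, 0, 0)

/-- `(∂_νφ)_α` evaluated along the fields. -/
def dφν (x : V3) (α : Fin k) : ℝ := fderiv ℝ K.φ (K.pt x) (0, Pi.single α 1, 0, 0)

/-- `(∂_Nφ)_α^j` evaluated along the fields. -/
def dφN (x : V3) (α : Fin k) (j : Fin 3) : ℝ :=
  fderiv ℝ K.φ (K.pt x) (0, 0, Pi.single α (Pi.single j 1), 0)

/-- Temperature `ϑ = ∂_ηφ` evaluated along the fields. -/
def temp (x : V3) : ℝ := fderiv ℝ K.φ (K.pt x) (0, 0, 0, 1)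

/-- Convective rate `ν̇ = (Dν)v`. -/
def νdot (x : V3) (α : Fin k) : ℝ := ∑ j, K.Dν x α j * K.v x j

/-- `(∂_νχ)_α` evaluated along the fields. -/
def dχν (x : V3) (α : Fin k) : ℝ :=
  fderiv ℝ K.χ (K.ν x, K.νdot x) (Pi.single α 1, 0)

/-- The field `(∂_ν̇χ)_α` evaluated along the fields. -/
def dχνdot (x : V3) (α : Fin k) : ℝ :=
  fderiv ℝ K.χ (K.ν x, K.νdot x) (0, Pi.single α 1)

/-- Pressure `p̃ = −∂_ιφ`. -/
def ptil (x : V3) : ℝ := -(K.dφι x)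

/-- Microstress `S = ρ ∂_Nφ`. -/
def S (x : V3) (α : Fin k) (j : Fin 3) : ℝ := K.ρ x * K.dφN x α j

/-- Self-interaction `z = ρ ∂_νφ`. -/
def z (x : V3) (α : Fin k) : ℝ := K.ρ x * K.dφν x α

/-- Ericksen stress `(T̄^E)_{ij} = Σ_α ∂_iν^α (∂_Nφ)_α^j`. -/
def TE (x : V3) (i j : Fin 3) : ℝ := ∑ α, K.Dν x α i * K.dφN x α j

/-- Specific enthalpy `ξ_c = φ − ι ∂_ιφ − ∂_νφ·ν − ∂_Nφ·Dν`. -/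
def ξc (x : V3) : ℝ :=
  K.φ (K.pt x) - K.ι x * K.dφι x - (∑ α, K.dφν x α * K.ν x α)
    - ∑ α, ∑ j, K.dφN x α j * K.Dν x α j

/-- Total enthalpy `h_c = (1/2)|v|² + ξ_c`. -/
def hc (x : V3) : ℝ := (1 / 2) * (∑ i, (K.v x i) ^ 2) + K.ξc x

/-- Steady momentum balance `ρ (Dv)v = div T` with `T = −p̃ I − T̄^E`
(stated componentwise). -/
def MomentumBalance : Prop :=
  ∀ x ∈ K.B, ∀ i : Fin 3,
    K.ρ x * ∑ j, pd j (fun y => K.v y i) x * K.v x j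
      = ∑ j, pd j (fun y => -(K.ptil y) * (if i = j then (1:ℝ) else 0) - K.TE y i j) x

/-- Steady substructural balance `div S − z = v·grad(∂_ν̇χ) − ∂_νχ`
(stated componentwise on the order-parameter index). -/
def SubstructuralBalance : Prop :=
  ∀ x ∈ K.B, ∀ α : Fin k,
    (∑ j, pd j (fun y => K.S y α j) x) - K.z x α
      = (∑ j, K.v x j * pd j (fun y => K.dχνdot y α) x) - K.dχν x α

end ComplexFluid

-- ===== auxiliary lemmas =====

section PdLemmas

variable {f g : V3 → ℝ} {x : V3} {i : Fin 3}

lemma pd_congr (h : f =ᶠ[nhds x] g) : pd i f x = pd i g x := by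
  unfold pd; rw [h.fderiv_eq]

lemma pd_const (c : ℝ) : pd i (fun _ => c) x = 0 := by simp [pd]

lemma pd_add (hf : DifferentiableAt ℝ f x) (hg : DifferentiableAt ℝ g x) :
    pd i (fun y => f y + g y) x = pd i f x + pd i g x := by
  simp [pd, fderiv_fun_add hf hg]

lemma pd_sub (hf : DifferentiableAt ℝ f x) (hg : DifferentiableAt ℝ g x) :
    pd i (fun y => f y - g y) x = pd i f x - pd i g x := by
  simp [pd, fderiv_fun_sub hf hg]

lemma pd_mul (hf : DifferentiableAt ℝ f x) (hg : DifferentiableAt ℝ g x) :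
    pd i (fun y => f y * g y) x = f x * pd i g x + g x * pd i f x := by
  simp [pd, fderiv_fun_mul hf hg]

lemma pd_sum {ι : Type*} {s : Finset ι} {F : ι → V3 → ℝ}
    (h : ∀ a ∈ s, DifferentiableAt ℝ (F a) x) :
    pd i (fun y => ∑ a ∈ s, F a y) x = ∑ a ∈ s, pd i (F a) x := by
  simp [pd, fderiv_fun_sum h]

lemma pd_const_mul (hf : DifferentiableAt ℝ f x) (c : ℝ) :
    pd i (fun y => c * f y) x = c * pd i f x := by
  simp [pd, fderiv_const_mul hf c]

lemma pd_mul_const (hf : DifferentiableAt ℝ f x) (c : ℝ) :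
    pd i (fun y => f y * c) x = pd i f x * c := by
  have : (fun y => f y * c) = fun y => c * f y := by funext y; ring
  rw [this, pd_const_mul hf c]; ring

lemma pd_locally_const {B : Set V3} (hB : IsOpen B) (hx : x ∈ B)
    (h : ∀ y ∈ B, f y = f x) : pd i f x = 0 := by
  have : f =ᶠ[nhds x] (fun _ => f x) :=
    Filter.eventually_of_mem (hB.mem_nhds hx) h
  rw [pd_congr this, pd_const]

end PdLemmas

lemma clm_decomp {k : ℕ} (L : (ℝ × (Fin k → ℝ) × (Fin k → Fin 3 → ℝ) × ℝ) →L[ℝ] ℝ)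
    (a : ℝ) (b : Fin k → ℝ) (c : Fin k → Fin 3 → ℝ) (d : ℝ) :
    L (a, b, c, d) = a * L (1, 0, 0, 0) + (∑ α, b α * L (0, Pi.single α 1, 0, 0))
      + (∑ α, ∑ j, c α j * L (0, 0, Pi.single α (Pi.single j 1), 0)) + d * L (0, 0, 0, 1) := by
  have key : (a, b, c, d) = a • ((1:ℝ), (0:Fin k → ℝ), (0:Fin k → Fin 3 → ℝ), (0:ℝ))
      + (∑ α, b α • ((0:ℝ), (Pi.single α 1 : Fin k → ℝ), (0:Fin k → Fin 3 → ℝ), (0:ℝ)))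
      + (∑ α, ∑ j, c α j • ((0:ℝ), (0:Fin k → ℝ),
          (Pi.single α (Pi.single j 1) : Fin k → Fin 3 → ℝ), (0:ℝ)))
      + d • ((0:ℝ), (0:Fin k → ℝ), (0:Fin k → Fin 3 → ℝ), (1:ℝ)) := by
    refine Prod.ext ?_ (Prod.ext ?_ (Prod.ext ?_ ?_))
    · simp [Prod.fst_sum]
    · simp [Prod.fst_sum, Prod.snd_sum]
      funext β; simp [Pi.single_apply]
    · simp [Prod.fst_sum, Prod.snd_sum]
      funext β m
      simp [Pi.single_apply, Finset.sum_apply, apply_ite (fun (u : Fin 3 → ℝ) => u m),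
        Finset.sum_ite_eq]
    · simp [Prod.snd_sum]
  rw [key]
  simp only [map_add, map_sum, map_smul, smul_eq_mul]

namespace ComplexFluid

variable {k : ℕ} (K : ComplexFluid k) {x : V3}

lemma cd_ρ (hx : x ∈ K.B) : ContDiffAt ℝ (⊤:ℕ∞) K.ρ x :=
  K.hρ.contDiffAt (K.hB.mem_nhds hx)

lemma cd_ι (hx : x ∈ K.B) : ContDiffAt ℝ (⊤:ℕ∞) K.ι x :=
  (K.cd_ρ hx).inv (ne_of_gt (K.hρpos x hx))

lemma cd_η (hx : x ∈ K.B) : ContDiffAt ℝ (⊤:ℕ∞) K.η x :=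
  K.hη.contDiffAt (K.hB.mem_nhds hx)

lemma cd_vj (hx : x ∈ K.B) (j : Fin 3) : ContDiffAt ℝ (⊤:ℕ∞) (fun y => K.v y j) x :=
  contDiffAt_pi.mp (K.hv.contDiffAt (K.hB.mem_nhds hx)) j

lemma cd_να (hx : x ∈ K.B) (α : Fin k) : ContDiffAt ℝ (⊤:ℕ∞) (fun y => K.ν y α) x :=
  contDiffAt_pi.mp (K.hν.contDiffAt (K.hB.mem_nhds hx)) α

lemma cd_ν (hx : x ∈ K.B) : ContDiffAt ℝ (⊤:ℕ∞) K.ν x :=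
  K.hν.contDiffAt (K.hB.mem_nhds hx)

lemma cd_Dναj (hx : x ∈ K.B) (α : Fin k) (j : Fin 3) :
    ContDiffAt ℝ (⊤:ℕ∞) (fun y => K.Dν y α j) x := by
  have h1 : ContDiffAt ℝ (⊤:ℕ∞) (fderiv ℝ (fun y => K.ν y α)) x :=
    (K.cd_να hx α).fderiv_right (by simp)
  exact h1.clm_apply contDiffAt_const

lemma cd_Dν (hx : x ∈ K.B) : ContDiffAt ℝ (⊤:ℕ∞) K.Dν x :=
  contDiffAt_pi.mpr fun α => contDiffAt_pi.mpr fun j => K.cd_Dναj hx α j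

lemma cd_pt (hx : x ∈ K.B) : ContDiffAt ℝ (⊤:ℕ∞) K.pt x :=
  (K.cd_ι hx).prodMk ((K.cd_ν hx).prodMk ((K.cd_Dν hx).prodMk (K.cd_η hx)))

lemma cd_dφw (hx : x ∈ K.B) (w : ℝ × (Fin k → ℝ) × (Fin k → Fin 3 → ℝ) × ℝ) :
    ContDiffAt ℝ (⊤:ℕ∞) (fun y => fderiv ℝ K.φ (K.pt y) w) x := by
  have h1 : ContDiff ℝ (⊤:ℕ∞) (fderiv ℝ K.φ) := K.hφ.fderiv_right (by simp)
  exact (h1.contDiffAt.comp x (K.cd_pt hx)).clm_apply contDiffAt_const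

lemma cd_dφι (hx : x ∈ K.B) : ContDiffAt ℝ (⊤:ℕ∞) K.dφι x := K.cd_dφw hx _

lemma cd_dφν (hx : x ∈ K.B) (α : Fin k) :
    ContDiffAt ℝ (⊤:ℕ∞) (fun y => K.dφν y α) x := K.cd_dφw hx _

lemma cd_dφN (hx : x ∈ K.B) (α : Fin k) (j : Fin 3) :
    ContDiffAt ℝ (⊤:ℕ∞) (fun y => K.dφN y α j) x := K.cd_dφw hx _

-- derivative of pt applied to a basis direction
lemma fderiv_pt_apply (hx : x ∈ K.B) (i : Fin 3) :
    fderiv ℝ K.pt x (Pi.single i 1)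
      = (pd i K.ι x, fun α => K.Dν x α i,
          fun α j => pd i (fun y => K.Dν y α j) x, pd i K.η x) := by
  have hι := ((K.cd_ι hx).differentiableAt (by simp)).hasFDerivAt
  have hη := ((K.cd_η hx).differentiableAt (by simp)).hasFDerivAt
  have hν : HasFDerivAt K.ν
      (ContinuousLinearMap.pi fun α => fderiv ℝ (fun y => K.ν y α) x) x :=
    hasFDerivAt_pi.mpr fun α => ((K.cd_να hx α).differentiableAt (by simp)).hasFDerivAt
  have hDν : HasFDerivAt K.Dν
      (ContinuousLinearMap.pi fun α => ContinuousLinearMap.pi fun j =>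
        fderiv ℝ (fun y => K.Dν y α j) x) x :=
    hasFDerivAt_pi.mpr fun α => hasFDerivAt_pi.mpr fun j =>
      ((K.cd_Dναj hx α j).differentiableAt (by simp)).hasFDerivAt
  have hpt : HasFDerivAt K.pt
      ((fderiv ℝ K.ι x).prod ((ContinuousLinearMap.pi fun α =>
          fderiv ℝ (fun y => K.ν y α) x).prod
        ((ContinuousLinearMap.pi fun α => ContinuousLinearMap.pi fun j =>
          fderiv ℝ (fun y => K.Dν y α j) x).prod (fderiv ℝ K.η x)))) x :=
    HasFDerivAt.prodMk hι (HasFDerivAt.prodMk hν (HasFDerivAt.prodMk hDν hη))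
  rw [hpt.fderiv]
  simp only [ContinuousLinearMap.prod_apply, ContinuousLinearMap.pi_apply]
  rfl

lemma pd_comp_φ (hx : x ∈ K.B) (i : Fin 3) :
    pd i (fun y => K.φ (K.pt y)) x
      = K.dφι x * pd i K.ι x + (∑ α, K.dφν x α * K.Dν x α i)
        + (∑ α, ∑ j, K.dφN x α j * pd i (fun y => K.Dν y α j) x)
        + K.temp x * pd i K.η x := by
  have hφd : DifferentiableAt ℝ K.φ (K.pt x) :=
    (K.hφ.differentiable (by simp)).differentiableAt
  have hptd : DifferentiableAt ℝ K.pt x := (K.cd_pt hx).differentiableAt (by simp)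
  unfold pd
  rw [show (fun y => K.φ (K.pt y)) = K.φ ∘ K.pt from rfl, fderiv_comp x hφd hptd]
  rw [ContinuousLinearMap.comp_apply, K.fderiv_pt_apply hx i, clm_decomp]
  unfold dφι dφν dφN temp Dν pd
  ring_nf
  simp [mul_comm]
  ring

end ComplexFluid

namespace ComplexFluid

variable {k : ℕ} (K : ComplexFluid k) {x : V3}

lemma Dν_eq (α : Fin k) (i : Fin 3) (x : V3) :
    pd i (fun y => K.ν y α) x = K.Dν x α i := rfl

lemma pd_ξc (hx : x ∈ K.B) (i : Fin 3) :
    pd i K.ξc x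
      = -(K.ι x * pd i K.dφι x)
        - (∑ α, pd i (fun y => K.dφν y α) x * K.ν x α)
        - (∑ α, ∑ j, pd i (fun y => K.dφN y α j) x * K.Dν x α j)
        + K.temp x * pd i K.η x := by
  have dι : DifferentiableAt ℝ K.ι x := (K.cd_ι hx).differentiableAt (by simp)
  have dφιd : DifferentiableAt ℝ K.dφι x := (K.cd_dφι hx).differentiableAt (by simp)
  have dνα : ∀ α, DifferentiableAt ℝ (fun y => K.ν y α) x :=
    fun α => (K.cd_να hx α).differentiableAt (by simp)
  have dφνd : ∀ α, DifferentiableAt ℝ (fun y => K.dφν y α) x :=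
    fun α => (K.cd_dφν hx α).differentiableAt (by simp)
  have dDν : ∀ α j, DifferentiableAt ℝ (fun y => K.Dν y α j) x :=
    fun α j => (K.cd_Dναj hx α j).differentiableAt (by simp)
  have dφNd : ∀ α j, DifferentiableAt ℝ (fun y => K.dφN y α j) x :=
    fun α j => (K.cd_dφN hx α j).differentiableAt (by simp)
  have dφpt : DifferentiableAt ℝ (fun y => K.φ (K.pt y)) x :=
    ((K.hφ.differentiable (by simp)).differentiableAt).comp x
      ((K.cd_pt hx).differentiableAt (by simp))
  have dB : DifferentiableAt ℝ (fun y => K.ι y * K.dφι y) x := dι.mul dφιd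
  have dS1 : DifferentiableAt ℝ (fun y => ∑ α, K.dφν y α * K.ν y α) x :=
    DifferentiableAt.fun_sum fun α _ => (dφνd α).mul (dνα α)
  have dS2 : DifferentiableAt ℝ (fun y => ∑ α, ∑ j, K.dφN y α j * K.Dν y α j) x :=
    DifferentiableAt.fun_sum fun α _ => DifferentiableAt.fun_sum fun j _ => (dφNd α j).mul (dDν α j)
  have h1 : K.ξc = fun y => K.φ (K.pt y) - K.ι y * K.dφι y
      - (∑ α, K.dφν y α * K.ν y α) - ∑ α, ∑ j, K.dφN y α j * K.Dν y α j := rfl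
  rw [h1, pd_sub ((dφpt.fun_sub dB).fun_sub dS1) dS2, pd_sub (dφpt.fun_sub dB) dS1,
    pd_sub dφpt dB, pd_mul dι dφιd, K.pd_comp_φ hx i,
    pd_sum (fun α _ => (dφνd α).fun_mul (dνα α)),
    pd_sum (fun α _ => DifferentiableAt.fun_sum fun j _ => (dφNd α j).fun_mul (dDν α j))]
  rw [show (∑ α, pd i (fun y => K.dφν y α * K.ν y α) x)
      = ∑ α, (K.dφν x α * K.Dν x α i + K.ν x α * pd i (fun y => K.dφν y α) x) from
    Finset.sum_congr rfl fun α _ => by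
      rw [pd_mul (dφνd α) (dνα α), K.Dν_eq]]
  rw [show (∑ α, pd i (fun y => ∑ j, K.dφN y α j * K.Dν y α j) x)
      = ∑ α, ∑ j, (K.dφN x α j * pd i (fun y => K.Dν y α j) x
          + K.Dν x α j * pd i (fun y => K.dφN y α j) x) from
    Finset.sum_congr rfl fun α _ => by
      rw [pd_sum (fun j _ => (dφNd α j).fun_mul (dDν α j))]
      exact Finset.sum_congr rfl fun j _ => pd_mul (dφNd α j) (dDν α j)]
  simp only [Finset.sum_add_distrib]
  ring_nf
  simp [mul_comm]

lemma momentum_eq (hx : x ∈ K.B) (hbal : K.MomentumBalance) (i : Fin 3) :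
    ∑ j, pd j (fun y => K.v y i) x * K.v x j
      = K.ι x * (pd i K.dφι x
          - ∑ j, ∑ α, (K.Dν x α i * pd j (fun y => K.dφN y α j) x
              + K.dφN x α j * pd j (fun y => K.Dν y α i) x)) := by
  have hρ0 : K.ρ x ≠ 0 := ne_of_gt (K.hρpos x hx)
  have dφιd : DifferentiableAt ℝ K.dφι x := (K.cd_dφι hx).differentiableAt (by simp)
  have dDν : ∀ α j, DifferentiableAt ℝ (fun y => K.Dν y α j) x :=
    fun α j => (K.cd_Dναj hx α j).differentiableAt (by simp)
  have dφNd : ∀ α j, DifferentiableAt ℝ (fun y => K.dφN y α j) x :=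
    fun α j => (K.cd_dφN hx α j).differentiableAt (by simp)
  have key : ∀ j : Fin 3,
      pd j (fun y => -(K.ptil y) * (if i = j then (1:ℝ) else 0) - K.TE y i j) x
        = pd j K.dφι x * (if i = j then (1:ℝ) else 0)
          - ∑ α, (K.Dν x α i * pd j (fun y => K.dφN y α j) x
              + K.dφN x α j * pd j (fun y => K.Dν y α i) x) := by
    intro j
    have hfun : (fun y => -(K.ptil y) * (if i = j then (1:ℝ) else 0) - K.TE y i j)
        = fun y => K.dφι y * (if i = j then (1:ℝ) else 0)
            - ∑ α, K.Dν y α i * K.dφN y α j := by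
      funext y; simp [ptil, TE]
    rw [hfun, pd_sub (dφιd.mul_const _)
        (DifferentiableAt.fun_sum fun α _ => (dDν α i).fun_mul (dφNd α j)),
      pd_mul_const dφιd, pd_sum (fun α _ => (dDν α i).fun_mul (dφNd α j))]
    congr 1
    exact Finset.sum_congr rfl fun α _ => by
      rw [pd_mul (dDν α i) (dφNd α j)]
  have hb := hbal x hx i
  rw [Finset.sum_congr rfl (fun j _ => key j)] at hb
  rw [Finset.sum_sub_distrib] at hb
  have hι : (∑ j : Fin 3, pd j K.dφι x * (if i = j then (1:ℝ) else 0)) = pd i K.dφι x := by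
    simp [mul_ite, Finset.sum_ite_eq]
  rw [hι] at hb
  have : (∑ j, pd j (fun y => K.v y i) x * K.v x j)
      = (K.ρ x)⁻¹ * (K.ρ x * ∑ j, pd j (fun y => K.v y i) x * K.v x j) := by
    rw [inv_mul_cancel_left₀ hρ0]
  rw [this, hb]
  rfl

end ComplexFluid



/-- Corollary 4, substructural generation of vorticity in
complex fluids: under the steady momentum and substructural balances, if the
entropy `η` and the total enthalpy `h_c` are constant throughout `B`, then at
every point of `B` and for every index `i`:
`(ω × v)_i = −Σ_α ∂_i( ι ( Σ_j ∂_j S_α^j − v·grad((∂_ν̇χ)_α) + (∂_νχ)_α ) ) ν^α`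
`  − Σ_{α,j} ∂_i((∂_Nφ)_α^j) ∂_jν^α − ι Σ_α ∂_iν^α ( Σ_j ∂_j((∂_Nφ)_α^j) )`
`  − ι Σ_{α,j} (∂_Nφ)_α^j ∂_j∂_iν^α`. -/
theorem complexFluid_substructural_generation_of_vorticity
    {k : ℕ} (K : ComplexFluid k)
    (hbal : K.MomentumBalance) (hsub : K.SubstructuralBalance)
    (hη : ∀ x ∈ K.B, ∀ y ∈ K.B, K.η x = K.η y)
    (hh : ∀ x ∈ K.B, ∀ y ∈ K.B, K.hc x = K.hc y) :
    ∀ x ∈ K.B, ∀ i : Fin 3,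
      cross (curl K.v x) (K.v x) i
        = -(∑ α, pd i (fun y => K.ι y *
              ((∑ j, pd j (fun w => K.S w α j) y)
                - (∑ j, K.v y j * pd j (fun w => K.dχνdot w α) y)
                + K.dχν y α)) x * K.ν x α)
          - (∑ α, ∑ j, pd i (fun y => K.dφN y α j) x * K.Dν x α j)
          - K.ι x * (∑ α, K.Dν x α i * (∑ j, pd j (fun y => K.dφN y α j) x))
          - K.ι x * ∑ α, ∑ j, K.dφN x α j * pd j (fun y => K.Dν y α i) x := by

  intro x hx i
  -- differentiability facts
  have dvj : ∀ j, DifferentiableAt ℝ (fun y => K.v y j) x :=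
    fun j => (K.cd_vj hx j).differentiableAt (by simp)
  have dsqsum : DifferentiableAt ℝ (fun y => ∑ j, (K.v y j)^2) x :=
    DifferentiableAt.fun_sum fun j _ => (dvj j).fun_pow 2
  have dsq : DifferentiableAt ℝ (fun y => (1/2) * ∑ j, (K.v y j)^2) x :=
    dsqsum.const_mul _
  have dξ : DifferentiableAt ℝ K.ξc x := by
    have dι : DifferentiableAt ℝ K.ι x := (K.cd_ι hx).differentiableAt (by simp)
    have dφιd : DifferentiableAt ℝ K.dφι x := (K.cd_dφι hx).differentiableAt (by simp)
    have dφpt : DifferentiableAt ℝ (fun y => K.φ (K.pt y)) x :=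
      ((K.hφ.differentiable (by simp)).differentiableAt).comp x
        ((K.cd_pt hx).differentiableAt (by simp))
    exact ((dφpt.sub (dι.mul dφιd)).sub
        (DifferentiableAt.fun_sum fun α _ =>
          (((K.cd_dφν hx α).differentiableAt (by simp)).mul
            ((K.cd_να hx α).differentiableAt (by simp))))).sub
      (DifferentiableAt.fun_sum fun α _ => DifferentiableAt.fun_sum fun j _ =>
        (((K.cd_dφN hx α j).differentiableAt (by simp)).mul
          ((K.cd_Dναj hx α j).differentiableAt (by simp))))
  -- step A : substructural balance rewrites the first sum
  have hRA : (∑ α, pd i (fun y => K.ι y *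
        ((∑ j, pd j (fun w => K.S w α j) y)
          - (∑ j, K.v y j * pd j (fun w => K.dχνdot w α) y)
          + K.dχν y α)) x * K.ν x α)
      = ∑ α, pd i (fun y => K.dφν y α) x * K.ν x α := by
    refine Finset.sum_congr rfl fun α _ => ?_
    have hA : (fun y => K.ι y *
        ((∑ j, pd j (fun w => K.S w α j) y)
          - (∑ j, K.v y j * pd j (fun w => K.dχνdot w α) y)
          + K.dχν y α)) =ᶠ[nhds x] (fun y => K.dφν y α) := by
      filter_upwards [K.hB.mem_nhds hx] with y hy
      have h := hsub y hy α
      have hz : (∑ j, pd j (fun w => K.S w α j) y)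
          - (∑ j, K.v y j * pd j (fun w => K.dχνdot w α) y) + K.dχν y α
          = K.z y α := by linarith
      rw [hz]
      show (K.ρ y)⁻¹ * (K.ρ y * K.dφν y α) = K.dφν y α
      rw [inv_mul_cancel_left₀ (ne_of_gt (K.hρpos y hy))]
    rw [pd_congr hA]
  rw [hRA]
  -- step B : algebraic cross/curl identity
  have hcross : cross (curl K.v x) (K.v x) i
      = (∑ j, pd j (fun y => K.v y i) x * K.v x j)
        - ∑ j, K.v x j * pd i (fun y => K.v y j) x := by
    fin_cases i <;> simp [cross, curl, Fin.sum_univ_three] <;> ring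
  -- step C : gradient of kinetic energy
  have hgrad : pd i (fun y => (1/2) * ∑ j, (K.v y j)^2) x
      = ∑ j, K.v x j * pd i (fun y => K.v y j) x := by
    rw [pd_const_mul dsqsum, pd_sum (fun j _ => (dvj j).fun_pow 2)]
    rw [show (∑ j, pd i (fun y => (K.v y j)^2) x)
        = ∑ j, (K.v x j * pd i (fun y => K.v y j) x
            + K.v x j * pd i (fun y => K.v y j) x) from
      Finset.sum_congr rfl fun j _ => by
        have hf : (fun y => (K.v y j)^2) = fun y => K.v y j * K.v y j := by
          funext y; ring
        rw [hf, pd_mul (dvj j) (dvj j)]]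
    rw [Finset.mul_sum]
    exact Finset.sum_congr rfl fun j _ => by ring
  -- step D : constancy of total enthalpy and entropy
  have hη0 : pd i K.η x = 0 := pd_locally_const K.hB hx fun y hy => hη y hy x hx
  have hhc0 : pd i K.hc x = 0 := pd_locally_const K.hB hx fun y hy => hh y hy x hx
  have hhcsplit : pd i K.hc x
      = pd i (fun y => (1/2) * ∑ j, (K.v y j)^2) x + pd i K.ξc x := by
    have h2 : K.hc = fun y => (1/2) * (∑ j, (K.v y j)^2) + K.ξc y := rfl
    rw [h2, pd_add dsq dξ]
  have hgradξ : (∑ j, K.v x j * pd i (fun y => K.v y j) x) = - pd i K.ξc x := by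
    rw [← hgrad]; rw [hhcsplit] at hhc0; linarith
  -- assemble
  rw [hcross, K.momentum_eq hx hbal i, hgradξ, K.pd_ξc hx i, hη0]
  rw [show (∑ j : Fin 3, ∑ α, (K.Dν x α i * pd j (fun y => K.dφN y α j) x
        + K.dφN x α j * pd j (fun y => K.Dν y α i) x))
      = ∑ α, ∑ j : Fin 3, (K.Dν x α i * pd j (fun y => K.dφN y α j) x
        + K.dφN x α j * pd j (fun y => K.Dν y α i) x) from Finset.sum_comm]
  simp only [Finset.sum_add_distrib, mul_zero, mul_assoc, ← Finset.mul_sum]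
  ring
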